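/- The set S = {(0,0,0,0,0,0),(0,0,0,0,1,1),(1,1,0,0,0,0),(1,1,0,0,1,1)} ⊆ ℤ⁶ is L♮-convex, while its aggregation T = {(0,0,0),(0,1,1),(1,1,0),(1,2,1)} by the partition N₁={1,4}, N₂={2,5}, N₃={3,6} is not L♮-convex. -/

import Mathlib

/-- A nonempty set `S ⊆ ℤⁿ` is L♮-convex if it is closed under taking componentwise
rounded-up and rounded-down midpoints. -/
def LnatConvex {n : ℕ} (S : Set (Fin n → ℤ)) : Prop :=
  S.Nonempty ∧ ∀ x ∈ S, ∀ y ∈ S,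
    (fun i => ⌈((x i + y i : ℤ) : ℚ) / 2⌉) ∈ S ∧ (fun i => ⌊((x i + y i : ℤ) : ℚ) / 2⌋) ∈ S

/-- The set `S ⊆ ℤ⁶` is L♮-convex, but its aggregation by the partition
`N₁ = {1,4}, N₂ = {2,5}, N₃ = {3,6}` (0-indexed: `{0,3},{1,4},{2,5}`) is not. -/
theorem aggregation_not_lnatConvex :
    let S : Set (Fin 6 → ℤ) :=
      {![0,0,0,0,0,0], ![0,0,0,0,1,1], ![1,1,0,0,0,0], ![1,1,0,0,1,1]}
    let T : Set (Fin 3 → ℤ) :=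
      {y | ∃ x ∈ S, ∀ j : Fin 3, y j = x (Fin.castAdd 3 j) + x (Fin.natAdd 3 j)}
    LnatConvex S ∧ ¬ LnatConvex T := by
  intro S T
  constructor
  · constructor
    · exact ⟨![0,0,0,0,0,0], Or.inl rfl⟩
    · intro x hx y hy
      simp only [S, Set.mem_insert_iff, Set.mem_singleton_iff] at hx hy ⊢
      rcases hx with rfl | rfl | rfl | rfl <;> rcases hy with rfl | rfl | rfl | rfl <;>
        refine ⟨?_, ?_⟩ <;>
        first
          | (left; funext i; fin_cases i <;> norm_num [Int.ceil_eq_iff, Int.floor_eq_iff] <;> done)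
          | (right; left; funext i; fin_cases i <;> norm_num [Int.ceil_eq_iff, Int.floor_eq_iff] <;> done)
          | (right; right; left; funext i; fin_cases i <;>
              norm_num [Int.ceil_eq_iff, Int.floor_eq_iff] <;> done)
          | (right; right; right; funext i; fin_cases i <;>
              norm_num [Int.ceil_eq_iff, Int.floor_eq_iff] <;> done)
  · rintro ⟨-, h⟩
    have h1 : (![0,1,1] : Fin 3 → ℤ) ∈ T :=
      ⟨![0,0,0,0,1,1], Or.inr (Or.inl rfl), by decide⟩
    have h2 : (![1,1,0] : Fin 3 → ℤ) ∈ T :=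
      ⟨![1,1,0,0,0,0], Or.inr (Or.inr (Or.inl rfl)), by decide⟩
    obtain ⟨x, hx, hxe⟩ := (h _ h1 _ h2).1
    rcases hx with rfl | rfl | rfl | rfl
    · have := hxe 0
      norm_num [Fin.castAdd, Fin.natAdd, Fin.addNat, Fin.castLE, Int.ceil_eq_iff] at this
    · have := hxe 0
      norm_num [Fin.castAdd, Fin.natAdd, Fin.addNat, Fin.castLE, Int.ceil_eq_iff] at this
    · have := hxe 2
      norm_num [Fin.castAdd, Fin.natAdd, Fin.addNat, Fin.castLE, Int.ceil_eq_iff,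
        Matrix.cons_val_two, Matrix.tail_cons, Matrix.head_cons] at this
    · have := hxe 1
      norm_num [Fin.castAdd, Fin.natAdd, Fin.addNat, Fin.castLE, Int.ceil_eq_iff] at this
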